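/- For the FJ model on a signed graph with internal opinion vector s ∈ [−1,1]^n, the equilibrium opinion vector z = (I + L)^{−1} s can be expressed via the 2n × 2n matrix S as z = (1/2)·[I, −I]·S^{−1}·[I; −I]·s, i.e., z = (1/2)·(u − v) where (u; v) = S^{−1}(s; −s) with u, v ∈ ℝ^n. -/

import Mathlib

open Matrix

/-- The signed Laplacian `D - A` is positive semidefinite for any symmetric real matrix `A`,
where `D` is the diagonal of absolute row sums. -/
lemma lap_psd {n : ℕ} (A : Matrix (Fin n) (Fin n) ℝ) (hA : A.IsSymm) :
    (Matrix.diagonal (fun i => ∑ j, |A i j|) - A).PosSemidef := by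
  have hsymm : ∀ i j, A j i = A i j := fun i j => by
    conv_lhs => rw [← hA]
    rfl
  rw [Matrix.posSemidef_iff_dotProduct_mulVec]
  constructor
  · show _ᴴ = _
    rw [Matrix.conjTranspose_eq_transpose_of_trivial]
    exact (Matrix.isSymm_diagonal _).sub hA
  · intro x
    have hx : star x = x := rfl
    rw [hx]
    have key : x ⬝ᵥ ((Matrix.diagonal (fun i => ∑ j, |A i j|) - A) *ᵥ x)
        = ∑ i, ∑ j, (|A i j| * x i ^ 2 - A i j * x i * x j) := by
      rw [Matrix.sub_mulVec, dotProduct_sub]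
      have k1 : x ⬝ᵥ (Matrix.diagonal (fun i => ∑ j, |A i j|) *ᵥ x)
          = ∑ i, ∑ j, |A i j| * x i ^ 2 := by
        simp only [dotProduct, Matrix.mulVec_diagonal]
        refine Finset.sum_congr rfl fun i _ => ?_
        rw [← Finset.sum_mul]
        ring
      have k2 : x ⬝ᵥ (A *ᵥ x) = ∑ i, ∑ j, A i j * x i * x j := by
        simp only [dotProduct, Matrix.mulVec, dotProduct, Finset.mul_sum]
        exact Finset.sum_congr rfl fun i _ => Finset.sum_congr rfl fun j _ => by ring
      rw [k1, k2, ← Finset.sum_sub_distrib]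
      exact Finset.sum_congr rfl fun i _ => (Finset.sum_sub_distrib _ _).symm
    rw [key]
    have h2 : (2:ℝ) * ∑ i, ∑ j, (|A i j| * x i ^ 2 - A i j * x i * x j)
        = ∑ i, ∑ j, ((|A i j| * x i ^ 2 - A i j * x i * x j)
            + (|A i j| * x j ^ 2 - A i j * x i * x j)) := by
      rw [two_mul]
      nth_rewrite 1 [Finset.sum_comm]
      rw [← Finset.sum_add_distrib]
      refine Finset.sum_congr rfl fun i _ => ?_
      rw [← Finset.sum_add_distrib]
      refine Finset.sum_congr rfl fun j _ => ?_
      rw [hsymm i j]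
      ring
    have hterm : ∀ i j, 0 ≤ (|A i j| * x i ^ 2 - A i j * x i * x j)
        + (|A i j| * x j ^ 2 - A i j * x i * x j) := by
      intro i j
      rcases abs_cases (A i j) with ⟨h1, h2⟩ | ⟨h1, h2⟩ <;> rw [h1] <;>
        nlinarith [sq_nonneg (x i - x j), sq_nonneg (x i + x j)]
    have : 0 ≤ (2:ℝ) * ∑ i, ∑ j, (|A i j| * x i ^ 2 - A i j * x i * x j) := by
      rw [h2]
      exact Finset.sum_nonneg fun i _ => Finset.sum_nonneg fun j _ => hterm i j
    linarith

theorem stmt_10 (n : ℕ) (hn : 1 ≤ n) (A : Matrix (Fin n) (Fin n) ℝ)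
    (hAsymm : A.IsSymm) (hAdiag : ∀ i, A i i = 0)
    (hAval : ∀ i j, A i j = -1 ∨ A i j = 0 ∨ A i j = 1)
    (Apos Aneg D L : Matrix (Fin n) (Fin n) ℝ)
    (hApos : ∀ i j, Apos i j = max (A i j) 0)
    (hAneg : ∀ i j, Aneg i j = min (A i j) 0)
    (hD : D = Matrix.diagonal fun i => ∑ j, |A i j|)
    (hL : L = D - A)
    (S : Matrix (Fin n ⊕ Fin n) (Fin n ⊕ Fin n) ℝ)
    (hS : S = Matrix.fromBlocks (1 + D - Apos) Aneg Aneg (1 + D - Apos))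
    (s : Fin n → ℝ) (hs : ∀ i, s i ∈ Set.Icc (-1 : ℝ) 1) :
    ∀ i, ((1 + L)⁻¹ *ᵥ s) i =
      (1 / 2) * ((S⁻¹ *ᵥ Sum.elim s (-s)) (Sum.inl i) -
        (S⁻¹ *ᵥ Sum.elim s (-s)) (Sum.inr i)) := by
  -- entrywise facts first
  have hBval : ∀ i j, (Apos - Aneg) i j = |A i j| := by
    intro i j
    rw [Matrix.sub_apply, hApos, hAneg]
    rcases le_total (A i j) 0 with h | h
    · rw [max_eq_right h, min_eq_left h, abs_of_nonpos h]; ring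
    · rw [max_eq_left h, min_eq_right h, abs_of_nonneg h]; ring
  have hABsum : Apos + Aneg = A := by
    ext i j
    rw [Matrix.add_apply, hApos, hAneg, max_add_min, add_zero]
  -- notation
  set B : Matrix (Fin n) (Fin n) ℝ := Apos - Aneg with hB
  set M : Matrix (Fin n) (Fin n) ℝ := 1 + D - Apos with hM
  set N : Matrix (Fin n) (Fin n) ℝ := Aneg with hN
  -- M - N = 1 + L
  have hMN1 : M - N = 1 + L := by
    rw [hM, hL, ← hABsum]
    abel
  -- M + N = 1 + (D - B)
  have hDB : D = Matrix.diagonal (fun i => ∑ j, |B i j|) := by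
    rw [hD]
    have : (fun i => ∑ j, |A i j|) = fun i => ∑ j, |B i j| := by
      funext i
      exact Finset.sum_congr rfl fun j _ => ((by rw [hBval, abs_abs]) : |B i j| = |A i j|).symm
    rw [this]
  have hMN2 : M + N = 1 + (Matrix.diagonal (fun i => ∑ j, |B i j|) - B) := by
    rw [hM, hB, ← hDB]
    abel
  have hBsymm : B.IsSymm := by
    rw [Matrix.IsSymm]
    ext i j
    rw [Matrix.transpose_apply, hBval, hBval, hAsymm.apply i j]
  clear_value B M N
  -- positive definiteness
  have hPD1 : (1 + L).PosDef := by
    rw [hL, hD]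
    exact Matrix.PosDef.one.add_posSemidef (lap_psd A hAsymm)
  have hPD2 : (M + N).PosDef := by
    rw [hMN2]
    exact Matrix.PosDef.one.add_posSemidef (lap_psd B hBsymm)
  have hPD1' : (M - N).PosDef := hMN1 ▸ hPD1
  -- invertibility of S via explicit inverse
  have hInv1 : (M + N) * (M + N)⁻¹ = 1 := Matrix.mul_nonsing_inv _ hPD2.det_pos.ne'.isUnit
  have hInv1' : (M + N)⁻¹ * (M + N) = 1 := Matrix.nonsing_inv_mul _ hPD2.det_pos.ne'.isUnit
  have hInv2 : (M - N) * (M - N)⁻¹ = 1 := Matrix.mul_nonsing_inv _ hPD1'.det_pos.ne'.isUnit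
  have hInv2' : (M - N)⁻¹ * (M - N) = 1 := Matrix.nonsing_inv_mul _ hPD1'.det_pos.ne'.isUnit
  set P : Matrix (Fin n) (Fin n) ℝ := (1/2 : ℝ) • ((M + N)⁻¹ + (M - N)⁻¹) with hP
  set Q : Matrix (Fin n) (Fin n) ℝ := (1/2 : ℝ) • ((M + N)⁻¹ - (M - N)⁻¹) with hQ
  have e1 : M * P + N * Q = 1 := by
    rw [hP, hQ, Matrix.mul_smul, Matrix.mul_smul, ← smul_add]
    have : M * ((M + N)⁻¹ + (M - N)⁻¹) + N * ((M + N)⁻¹ - (M - N)⁻¹)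
        = (M + N) * (M + N)⁻¹ + (M - N) * (M - N)⁻¹ := by
      noncomm_ring
    rw [this, hInv1, hInv2, ← two_smul ℝ (1 : Matrix (Fin n) (Fin n) ℝ), smul_smul]
    norm_num
  have e2 : M * Q + N * P = 0 := by
    rw [hP, hQ, Matrix.mul_smul, Matrix.mul_smul, ← smul_add]
    have : M * ((M + N)⁻¹ - (M - N)⁻¹) + N * ((M + N)⁻¹ + (M - N)⁻¹)
        = (M + N) * (M + N)⁻¹ - (M - N) * (M - N)⁻¹ := by
      noncomm_ring
    rw [this, hInv1, hInv2, sub_self, smul_zero]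
  set T : Matrix (Fin n ⊕ Fin n) (Fin n ⊕ Fin n) ℝ := Matrix.fromBlocks P Q Q P with hT
  have hST : S * T = 1 := by
    rw [hS, hT, Matrix.fromBlocks_multiply, e1, e2, add_comm (N * P) (M * Q), e2,
      add_comm (N * Q) (M * P), e1, ← Matrix.fromBlocks_one]
  have hSunit : IsUnit S.det :=
    (Matrix.isUnit_iff_isUnit_det S).mp ⟨⟨S, T, hST, mul_eq_one_comm.mp hST⟩, rfl⟩
  -- z
  set z : Fin n → ℝ := (1 + L)⁻¹ *ᵥ s with hz
  have h1Lz : (1 + L) *ᵥ z = s := by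
    rw [hz, Matrix.mulVec_mulVec, Matrix.mul_nonsing_inv _ hPD1.det_pos.ne'.isUnit,
      Matrix.one_mulVec]
  have hMNz : (M - N) *ᵥ z = s := by rw [hMN1]; exact h1Lz
  have hSw : S *ᵥ Sum.elim z (-z) = Sum.elim s (-s) := by
    rw [hS, Matrix.fromBlocks_mulVec]
    have hil : Sum.elim z (-z) ∘ Sum.inl = z := Sum.elim_comp_inl _ _
    have hir : Sum.elim z (-z) ∘ Sum.inr = -z := Sum.elim_comp_inr _ _
    rw [hil, hir]
    have top : M *ᵥ z + N *ᵥ (-z) = s := by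
      rw [Matrix.mulVec_neg, ← sub_eq_add_neg, ← Matrix.sub_mulVec]; exact hMNz
    have bot : N *ᵥ z + M *ᵥ (-z) = -s := by
      rw [Matrix.mulVec_neg, ← sub_eq_add_neg, ← Matrix.sub_mulVec,
        show N - M = -(M - N) from by abel, Matrix.neg_mulVec, hMNz]
    rw [top, bot]
  have hSolve : S⁻¹ *ᵥ Sum.elim s (-s) = Sum.elim z (-z) := by
    rw [← hSw, Matrix.mulVec_mulVec, Matrix.nonsing_inv_mul _ hSunit, Matrix.one_mulVec]
  intro i
  rw [hSolve]
  show z i = 1 / 2 * (z i - (-z) i)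
  simp
  ring
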